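/- Let σ be the permutation of {0,1,…,2n−1} consisting of the two n-cycles (0,1,…,n−1) and (n,n+1,…,2n−1). Then there are exactly n ways to write σ as a product of two involutions that exchange the two cycles of σ: namely σ = J_k ∘ J_{k−1} for k = 0,…,n−1, where J_k is the involution whose transpositions are (x, n + ((k − x) mod n)) for x = 0,…,n−1. -/
import Mathlib


/- Let `σ` be the permutation of `{0,…,2n−1}` with the two `n`-cycles `(0,…,n−1)` and
`(n,…,2n−1)`. There are exactly `n` ways to write `σ` as a product of two involutions exchanging
the two cycles; the factorizations are exactly `σ = J_k ∘ J_{k−1}` for `0 ≤ k < n`, where `J_k`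
swaps `x` with `n + ((k − x) mod n)` for `0 ≤ x < n`. -/
open scoped Classical in
theorem stmt_4 (n : ℕ) (hn : 1 ≤ n) (σ : Equiv.Perm (Fin (2 * n)))
    (hσ₁ : ∀ x : Fin (2 * n), (x : ℕ) < n → ((σ x : ℕ) : ℤ) = ((x : ℕ) + 1) % n)
    (hσ₂ : ∀ x : Fin (2 * n), n ≤ (x : ℕ) → ((σ x : ℕ) : ℤ) = n + (((x : ℕ) - (n : ℤ)) + 1) % n)
    (J : ℤ → Equiv.Perm (Fin (2 * n)))
    (hJ : ∀ (k : ℤ) (x : Fin (2 * n)), (x : ℕ) < n →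
      ((J k x : ℕ) : ℤ) = n + (k - (x : ℕ)) % n ∧ J k (J k x) = x) :
    (Finset.univ.filter fun p : Equiv.Perm (Fin (2 * n)) × Equiv.Perm (Fin (2 * n)) =>
        p.1 * p.1 = 1 ∧ p.2 * p.2 = 1 ∧ p.2 * p.1 = σ ∧
        p.1 '' {x : Fin (2 * n) | (x : ℕ) < n} = {x : Fin (2 * n) | n ≤ (x : ℕ)} ∧
        p.2 '' {x : Fin (2 * n) | (x : ℕ) < n} = {x : Fin (2 * n) | n ≤ (x : ℕ)}).card = n ∧
    ∀ p : Equiv.Perm (Fin (2 * n)) × Equiv.Perm (Fin (2 * n)),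
      (p.1 * p.1 = 1 ∧ p.2 * p.2 = 1 ∧ p.2 * p.1 = σ ∧
        p.1 '' {x : Fin (2 * n) | (x : ℕ) < n} = {x : Fin (2 * n) | n ≤ (x : ℕ)} ∧
        p.2 '' {x : Fin (2 * n) | (x : ℕ) < n} = {x : Fin (2 * n) | n ≤ (x : ℕ)}) ↔
      ∃ k : ℤ, 0 ≤ k ∧ k < n ∧ p = (J (k - 1), J k) := by
  have hn' : (0:ℤ) < (n:ℤ) := by exact_mod_cast hn
  have hnz : (n:ℤ) ≠ 0 := hn'.ne'
  have hm : ∀ a : ℤ, 0 ≤ a % n := fun a => Int.emod_nonneg a hnz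
  have hml : ∀ a : ℤ, a % n < n := fun a => Int.emod_lt_of_pos a hn'
  have hsm : ∀ a : ℤ, 0 ≤ a → a < n → a % n = a := fun a h1 h2 => Int.emod_eq_of_lt h1 h2
  have hsub : ∀ a b : ℤ, (a - b % (n:ℤ)) % n = (a - b) % n := by
    intro a b
    rw [Int.sub_emod, Int.emod_emod_of_dvd _ dvd_rfl, ← Int.sub_emod]
  have hcast : ∀ x y : Fin (2 * n), ((x:ℕ):ℤ) = ((y:ℕ):ℤ) → x = y := by
    intro x y h; exact Fin.ext (by exact_mod_cast h)
  have hlt2 : ∀ x : Fin (2 * n), (x:ℕ) < 2 * n := fun x => x.isLt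
  have hJs : ∀ (k:ℤ) (x : Fin (2 * n)), (x:ℕ) < n →
      ((J k x : ℕ):ℤ) = n + (k - (x:ℕ)) % n := fun k x h => (hJ k x h).1
  -- J k x is in the top block when x is in the bottom block
  have hJge : ∀ (k:ℤ) (x : Fin (2 * n)), (x:ℕ) < n → n ≤ ((J k x : ℕ)) := by
    intro k x h
    have := hJs k x h
    have h1 := hm (k - (x:ℕ))
    omega
  -- value of J on top block
  have hJb : ∀ (k:ℤ) (y : Fin (2 * n)), n ≤ (y:ℕ) →
      ((J k y : ℕ):ℤ) = (k - ((y:ℕ) - (n:ℤ))) % n := by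
    intro k y hy
    set t : ℤ := (k - ((y:ℕ) - (n:ℤ))) % n with ht
    have ht0 : 0 ≤ t := hm _
    have htn : t < n := hml _
    set x : Fin (2 * n) := ⟨t.toNat, by omega⟩ with hx
    have hxv : ((x:ℕ):ℤ) = t := by
      simp [hx]
      omega
    have hxn : (x:ℕ) < n := by omega
    have hJx : J k x = y := by
      apply hcast
      rw [hJs k x hxn, hxv]
      have h2 : (k - t) % (n:ℤ) = ((y:ℕ) - (n:ℤ)) % n := by
        rw [ht, hsub]
        congr 1
        ring
      have h3 : ((y:ℕ) - (n:ℤ)) % n = (y:ℕ) - (n:ℤ) := by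
        apply hsm
        · omega
        · have := hlt2 y; push_cast; omega
      rw [h2, h3]; ring
    have := (hJ k x hxn).2
    rw [hJx] at this
    rw [this, hxv]
  -- J on top block lands in bottom block
  have hJbl : ∀ (k:ℤ) (y : Fin (2 * n)), n ≤ (y:ℕ) → ((J k y : ℕ)) < n := by
    intro k y hy
    have := hJb k y hy
    have := hml (k - ((y:ℕ) - (n:ℤ)))
    omega
  -- J is an involution everywhere
  have hJinv : ∀ (k:ℤ) (x : Fin (2 * n)), J k (J k x) = x := by
    intro k x
    by_cases h : (x:ℕ) < n
    · exact (hJ k x h).2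
    · push_neg at h
      apply hcast
      have h1 := hJbl k x h
      rw [hJs k (J k x) h1, hJb k x h, hsub]
      have h2 : (k - (k - ((x:ℕ) - (n:ℤ)))) % (n:ℤ) = ((x:ℕ) - (n:ℤ)) % n := by
        congr 1; ring
      have h3 : ((x:ℕ) - (n:ℤ)) % n = (x:ℕ) - (n:ℤ) := by
        apply hsm
        · omega
        · have := hlt2 x; push_cast; omega
      rw [h2, h3]; ring
  have hJinv2 : ∀ k : ℤ, J k * J k = 1 := by
    intro k
    ext x
    simp [hJinv k x]
  have hx0 : (0:ℕ) < 2 * n := by omega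
  -- J k is periodic in k mod n
  have hper : ∀ k k' : ℤ, k % n = k' % n → J k = J k' := by
    intro k k' hkk
    ext x
    rcases lt_or_ge ((x:ℕ)) n with h | h
    · have := hcast (J k x) (J k' x) ?_
      · exact congrArg Fin.val this
      rw [hJs k x h, hJs k' x h]
      have : (k - (x:ℕ)) % (n:ℤ) = (k' - (x:ℕ)) % n := by
        rw [Int.sub_emod, hkk, ← Int.sub_emod]
      rw [this]
    · have := hcast (J k x) (J k' x) ?_
      · exact congrArg Fin.val this
      rw [hJb k x h, hJb k' x h]
      rw [Int.sub_emod, hkk, ← Int.sub_emod]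
  -- product formula : J k * J (k-1) = σ
  have hprod : ∀ k : ℤ, J k * J (k - 1) = σ := by
    intro k
    ext x
    apply congrArg Fin.val
    apply hcast
    show ((J k (J (k-1) x) : ℕ) : ℤ) = _
    rcases lt_or_ge ((x:ℕ)) n with h | h
    · have h1 := hJge (k-1) x h
      rw [hJb k _ h1, hJs (k-1) x h, hσ₁ x h]
      have : (k - ((n:ℤ) + (k - 1 - (x:ℕ)) % n - n)) % (n:ℤ) = ((x:ℕ) + 1) % n := by
        have e1 : (k - ((n:ℤ) + (k - 1 - (x:ℕ)) % n - n)) = k - (k - 1 - (x:ℕ)) % n := by ring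
        rw [e1, hsub]
        congr 1; ring
      rw [this]
    · have h1 := hJbl (k-1) x h
      rw [hJs k _ h1, hJb (k-1) x h, hσ₂ x h]
      have : (k - (k - 1 - ((x:ℕ) - (n:ℤ))) % n) % (n:ℤ) = ((x:ℕ) - (n:ℤ) + 1) % n := by
        rw [hsub]
        congr 1; ring
      rw [this]
  -- image property
  have himg : ∀ k : ℤ, (J k) '' {x : Fin (2*n) | (x:ℕ) < n} = {x : Fin (2*n) | n ≤ (x:ℕ)} := by
    intro k
    ext y
    constructor
    · rintro ⟨x, hx, rfl⟩
      exact hJge k x hx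
    · intro hy
      exact ⟨J k y, hJbl k y hy, hJinv k y⟩
  have hsub2 : ∀ a b : ℤ, (a % (n:ℤ) - b) % n = (a - b) % n := by
    intro a b
    rw [Int.sub_emod, Int.emod_emod_of_dvd _ dvd_rfl, ← Int.sub_emod]
  set x0 : Fin (2 * n) := ⟨0, hx0⟩ with hx0def
  have hx0v : ((x0:ℕ):ℤ) = 0 := by simp [hx0def]
  have hx0n : (x0:ℕ) < n := by simp [hx0def]; omega
  -- uniqueness
  have huniq : ∀ τ₁ τ₂ : Equiv.Perm (Fin (2*n)),
      τ₁ * τ₁ = 1 → τ₂ * τ₂ = 1 → τ₂ * τ₁ = σ →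
      (τ₁ : Fin (2*n) → Fin (2*n)) '' {x : Fin (2*n) | (x:ℕ) < n} = {x : Fin (2*n) | n ≤ (x:ℕ)} →
      ∃ c : ℤ, 0 ≤ c ∧ c < n ∧ τ₁ = J c ∧ τ₂ = J (c+1) := by
    intro τ₁ τ₂ h1 h2 h3 h4
    have ht1 : ∀ x, τ₁ (τ₁ x) = x := by
      intro x
      have := Equiv.ext_iff.mp h1 x
      simpa using this
    have himg1 : ∀ x : Fin (2*n), (x:ℕ) < n → n ≤ ((τ₁ x : Fin (2*n)):ℕ) := by
      intro x hx
      have : τ₁ x ∈ (τ₁ : Fin (2*n) → Fin (2*n)) '' {x : Fin (2*n) | (x:ℕ) < n} :=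
        ⟨x, hx, rfl⟩
      rw [h4] at this
      exact this
    have hτ₂ : τ₂ = σ * τ₁ := by
      rw [← h3, mul_assoc, h1, mul_one]
    have hconj : ∀ z, σ (τ₁ (σ z)) = τ₁ z := by
      intro z
      have := Equiv.ext_iff.mp h2 (τ₁ z)
      rw [hτ₂] at this
      simp only [Equiv.Perm.mul_apply, Equiv.Perm.one_apply] at this
      rw [ht1 z] at this
      exact this
    set c : ℤ := ((τ₁ x0 : Fin (2*n)):ℕ) - n with hc
    have hc0 : 0 ≤ c := by
      have := himg1 x0 hx0n
      simp only [hc]; omega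
    have hcn : c < n := by
      have := hlt2 (τ₁ x0)
      simp only [hc]; push_cast; omega
    have hval : ∀ i : ℕ, ∀ x : Fin (2 * n), (x:ℕ) = i → i < n →
        (((τ₁ x : Fin (2*n)) : ℕ) : ℤ) = n + (c - (i:ℤ)) % n := by
      intro i
      induction i with
      | zero =>
        intro x hxval hi
        have hxx : x = x0 := Fin.ext (by rw [hxval])
        rw [hxx]
        have e0 : ((0:ℕ):ℤ) = 0 := rfl
        rw [e0, sub_zero, hsm c hc0 hcn]
        omega
      | succ i ih =>
        intro x hxval hi
        have hi' : i < n := by omega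
        set xi : Fin (2*n) := ⟨i, by omega⟩ with hxi
        have ihv := ih xi (by simp [hxi]) hi'
        have hσxi : σ xi = x := by
          apply hcast
          rw [hσ₁ xi (by simp [hxi]; omega)]
          have e1 : ((xi:ℕ):ℤ) = i := by simp [hxi]
          have e2 : ((x:ℕ):ℤ) = (i:ℤ)+1 := by rw [hxval]; push_cast; ring
          rw [e1, e2]
          exact hsm _ (by positivity) (by omega)
        have hwge : n ≤ ((τ₁ x : Fin (2*n)):ℕ) := himg1 x (by omega)
        have hσw := hσ₂ (τ₁ x) hwge
        have hcj : σ (τ₁ x) = τ₁ xi := by rw [← hσxi]; exact hconj xi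
        rw [hcj, ihv] at hσw
        have hkey : ((((τ₁ x : Fin (2*n)):ℕ):ℤ) - (n:ℤ) + 1) % n = (c - (i:ℤ)) % n := by
          linarith
        have hb1 : (0:ℤ) ≤ (((τ₁ x : Fin (2*n)):ℕ):ℤ) - n := by omega
        have hb2 : (((τ₁ x : Fin (2*n)):ℕ):ℤ) - n < n := by
          have := hlt2 (τ₁ x); push_cast; omega
        have hwn : (((τ₁ x : Fin (2*n)):ℕ):ℤ) - n
            = ((((τ₁ x : Fin (2*n)):ℕ):ℤ) - (n:ℤ)) % n := (hsm _ hb1 hb2).symm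
        have h5 : ((((τ₁ x : Fin (2*n)):ℕ):ℤ) - (n:ℤ)) % n = (c - (((i:ℕ)+1:ℕ) : ℤ)) % n := by
          have e1 : ((((τ₁ x : Fin (2*n)):ℕ):ℤ) - (n:ℤ)) % n
              = (((((τ₁ x : Fin (2*n)):ℕ):ℤ) - (n:ℤ) + 1) - 1) % n := by ring_nf
          rw [e1, Int.sub_emod, hkey, ← Int.sub_emod]
          congr 1
          push_cast; ring
        linarith [hwn, h5]
    have hτ₁J : τ₁ = J c := by
      have hagree : ∀ x : Fin (2*n), (x:ℕ) < n → τ₁ x = J c x := by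
        intro x hx
        apply hcast
        rw [hval (x:ℕ) x rfl hx, hJs c x hx]
      ext x
      apply congrArg Fin.val
      rcases lt_or_ge ((x:ℕ)) n with h | h
      · exact hagree x h
      · have h1' := hJbl c x h
        have h2' : τ₁ (J c x) = x := by rw [hagree _ h1', hJinv]
        calc τ₁ x = τ₁ (τ₁ (J c x)) := by rw [h2']
        _ = J c x := ht1 _
    have hpc : J (c+1) * J c = σ := by
      have := hprod (c+1)
      rwa [add_sub_cancel_right] at this
    have hτ₂J : τ₂ = J (c+1) := by
      rw [hτ₂, hτ₁J, ← hpc, mul_assoc, hJinv2, mul_one]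
    exact ⟨c, hc0, hcn, hτ₁J, hτ₂J⟩
  have hiff : ∀ p : Equiv.Perm (Fin (2*n)) × Equiv.Perm (Fin (2*n)),
      (p.1 * p.1 = 1 ∧ p.2 * p.2 = 1 ∧ p.2 * p.1 = σ ∧
        ⇑p.1 '' {x : Fin (2*n) | (x:ℕ) < n} = {x : Fin (2*n) | n ≤ (x:ℕ)} ∧
        ⇑p.2 '' {x : Fin (2*n) | (x:ℕ) < n} = {x : Fin (2*n) | n ≤ (x:ℕ)}) ↔
      ∃ k : ℤ, 0 ≤ k ∧ k < n ∧ p = (J (k - 1), J k) := by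
    intro p
    constructor
    · rintro ⟨h1, h2, h3, h4, h5⟩
      obtain ⟨c, hc0, hcn, e1, e2⟩ := huniq p.1 p.2 h1 h2 h3 h4
      refine ⟨(c+1) % n, hm _, hml _, ?_⟩
      have hk2 : J ((c+1) % n) = J (c+1) :=
        hper _ _ (by rw [Int.emod_emod_of_dvd _ dvd_rfl])
      have hk1 : J ((c+1) % n - 1) = J c := hper _ _ (by rw [hsub2]; congr 1; ring)
      exact Prod.ext (by rw [e1, ← hk1]) (by rw [e2, ← hk2])
    · rintro ⟨k, hk0, hkn, rfl⟩
      exact ⟨hJinv2 _, hJinv2 _, hprod k, himg _, himg _⟩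
  refine ⟨?_, hiff⟩
  have hinj : Set.InjOn (fun k : ℕ => (J ((k:ℤ)-1), J (k:ℤ))) (Finset.range n) := by
    intro a ha b hb hab
    simp only [Finset.coe_range, Set.mem_Iio] at ha hb
    have h2 : J (a:ℤ) = J (b:ℤ) := congrArg Prod.snd hab
    have h3 : J (a:ℤ) x0 = J (b:ℤ) x0 := by rw [h2]
    have h4 := hJs (a:ℤ) x0 hx0n
    have h5 := hJs (b:ℤ) x0 hx0n
    rw [h3, h5] at h4
    have h6 : ((a:ℤ) - ((x0:ℕ):ℤ)) % n = ((b:ℤ) - ((x0:ℕ):ℤ)) % n := by omega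
    rw [hx0v, sub_zero, sub_zero] at h6
    rw [hsm _ (by positivity) (by exact_mod_cast ha),
      hsm _ (by positivity) (by exact_mod_cast hb)] at h6
    exact_mod_cast h6
  have hset : (Finset.univ.filter fun p : Equiv.Perm (Fin (2 * n)) × Equiv.Perm (Fin (2 * n)) =>
        p.1 * p.1 = 1 ∧ p.2 * p.2 = 1 ∧ p.2 * p.1 = σ ∧
        ⇑p.1 '' {x : Fin (2 * n) | (x : ℕ) < n} = {x : Fin (2 * n) | n ≤ (x : ℕ)} ∧
        ⇑p.2 '' {x : Fin (2 * n) | (x : ℕ) < n} = {x : Fin (2 * n) | n ≤ (x : ℕ)})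
      = (Finset.range n).image (fun k : ℕ => (J ((k:ℤ)-1), J (k:ℤ))) := by
    ext p
    simp only [Finset.mem_filter, Finset.mem_univ, true_and, Finset.mem_image,
      Finset.mem_range]
    rw [hiff p]
    constructor
    · rintro ⟨k, hk0, hkn, hp⟩
      refine ⟨k.toNat, by omega, ?_⟩
      rw [hp, Int.toNat_of_nonneg hk0]
    · rintro ⟨k, hkn, rfl⟩
      exact ⟨(k:ℤ), Int.natCast_nonneg k, by exact_mod_cast hkn, rfl⟩
  rw [hset, Finset.card_image_of_injOn hinj, Finset.card_range]
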